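/- Let a ∈ ℝ, let φ : (a,∞) → ℝ be C¹ with φ'(t) > 0 for all t, and let u₀ ∈ (a,∞). Then Λ_{u₀} = ∫_{u₀}^{∞} dλ / √(e^{2(φ(λ) − φ(u₀))} − 1) is finite if and only if ∫_{u₀}^{∞} e^{−φ(λ)} dλ is finite. Consequently, if Λ_{λ₀} < ∞ for some λ₀ ∈ (a,∞), then Λ_{λ} < ∞ for every λ ∈ (a,∞). -/

import Mathlib

open Set Filter MeasureTheory
open scoped ENNReal

/-- The half-length `Λ_{u₀} = ∫_{u₀}^∞ dλ / √(e^{2(φ(λ)-φ(u₀))} - 1) ∈ (0,∞]`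
of the maximal interval of existence of the grim reaper through `u₀`. -/
noncomputable def Lam (φ : ℝ → ℝ) (u₀ : ℝ) : ℝ≥0∞ :=
  ∫⁻ t in Set.Ioi u₀, ENNReal.ofReal (1 / Real.sqrt (Real.exp (2 * (φ t - φ u₀)) - 1))

lemma aux_exp_sq (s : ℝ) : Real.exp (2 * s) = Real.exp s * Real.exp s := by
  rw [← Real.exp_add]; ring_nf

lemma aux_lo {s : ℝ} (hs : 0 < s) :
    Real.exp (-s) ≤ 1 / Real.sqrt (Real.exp (2 * s) - 1) := by
  have h1 : (1 : ℝ) < Real.exp (2 * s) := by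
    rw [← Real.exp_zero]; exact Real.exp_lt_exp.2 (by linarith)
  have hpos : 0 < Real.exp (2 * s) - 1 := by linarith
  have hsq : Real.sqrt (Real.exp (2 * s) - 1) ≤ Real.exp s := by
    rw [aux_exp_sq s]
    have h := Real.sqrt_le_sqrt
      (show Real.exp s * Real.exp s - 1 ≤ Real.exp s * Real.exp s by linarith)
    rwa [Real.sqrt_mul_self (Real.exp_nonneg s)] at h
  have h := one_div_le_one_div_of_le (Real.sqrt_pos.2 hpos) hsq
  rw [Real.exp_neg, ← one_div]
  exact h

lemma aux_hi {s s₁ : ℝ} (hs₁ : 0 < s₁) (hss : s₁ ≤ s) :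
    1 / Real.sqrt (Real.exp (2 * s) - 1)
      ≤ (1 / Real.sqrt (1 - Real.exp (-(2 * s₁)))) * Real.exp (-s) := by
  have hd : 0 < 1 - Real.exp (-(2 * s₁)) := by
    have : Real.exp (-(2 * s₁)) < 1 := by
      rw [← Real.exp_zero]; exact Real.exp_lt_exp.2 (by linarith)
    linarith
  have hkey : Real.exp (2 * s) * (1 - Real.exp (-(2 * s₁))) ≤ Real.exp (2 * s) - 1 := by
    have h1 : Real.exp (2 * s) * Real.exp (-(2 * s₁)) = Real.exp (2 * s - 2 * s₁) := by
      rw [← Real.exp_add]; ring_nf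
    have h2 : (1 : ℝ) ≤ Real.exp (2 * s - 2 * s₁) := Real.one_le_exp (by linarith)
    nlinarith
  have hsq : Real.exp s * Real.sqrt (1 - Real.exp (-(2 * s₁)))
      ≤ Real.sqrt (Real.exp (2 * s) - 1) := by
    have h := Real.sqrt_le_sqrt hkey
    have e1 : Real.sqrt (Real.exp (2 * s) * (1 - Real.exp (-(2 * s₁))))
        = Real.exp s * Real.sqrt (1 - Real.exp (-(2 * s₁))) := by
      rw [aux_exp_sq s, Real.sqrt_mul (by positivity), Real.sqrt_mul_self (Real.exp_nonneg s)]
    rwa [e1] at h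
  have hlhs : 0 < Real.exp s * Real.sqrt (1 - Real.exp (-(2 * s₁))) := by positivity
  have h := one_div_le_one_div_of_le hlhs hsq
  refine h.trans (le_of_eq ?_)
  rw [one_div, one_div, mul_inv, Real.exp_neg s]
  ring

/-- For a strictly increasing C¹ function `φ` on `(a,∞)`,
`Λ_{u₀} < ∞` if and only if `∫_{u₀}^∞ e^{-φ(λ)} dλ < ∞`; consequently
finiteness of `Λ_{l₀}` for one `l₀ ∈ (a,∞)` implies it for all `λ ∈ (a,∞)`. -/
theorem stmt_2 (a : ℝ) (φ φ' : ℝ → ℝ)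
    (hφ : ∀ t ∈ Ioi a, HasDerivAt φ (φ' t) t)
    (hφ'c : ContinuousOn φ' (Ioi a))
    (hφ'pos : ∀ t ∈ Ioi a, 0 < φ' t) :
    (∀ u₀ ∈ Ioi a,
      (Lam φ u₀ < ⊤ ↔ ∫⁻ t in Ioi u₀, ENNReal.ofReal (Real.exp (-φ t)) < ⊤)) ∧
    ((∃ l₀ ∈ Ioi a, Lam φ l₀ < ⊤) → ∀ l ∈ Ioi a, Lam φ l < ⊤) := by
  have hcont : ContinuousOn φ (Ioi a) := fun t ht => (hφ t ht).continuousAt.continuousWithinAt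
  have hderiv : ∀ t ∈ Ioi a, deriv φ t = φ' t := fun t ht => (hφ t ht).deriv
  have hmono : StrictMonoOn φ (Ioi a) := by
    apply strictMonoOn_of_deriv_pos (convex_Ioi a) hcont
    intro x hx
    rw [interior_Ioi] at hx
    rw [hderiv x hx]; exact hφ'pos x hx
  -- bounded pieces of the exponential integral are finite
  have hIocExp : ∀ x ∈ Ioi a, ∀ y : ℝ,
      ∫⁻ t in Ioc x y, ENNReal.ofReal (Real.exp (-φ t)) < ⊤ := by
    intro x hx y
    have hle : ∀ t ∈ Ioc x y,
        ENNReal.ofReal (Real.exp (-φ t)) ≤ ENNReal.ofReal (Real.exp (-φ x)) := by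
      intro t ht
      have hxt : x < t := ht.1
      have htA : t ∈ Ioi a := lt_trans hx hxt
      have : φ x ≤ φ t := (hmono hx htA hxt).le
      exact ENNReal.ofReal_le_ofReal (Real.exp_le_exp.2 (by linarith))
    calc ∫⁻ t in Ioc x y, ENNReal.ofReal (Real.exp (-φ t))
        ≤ ∫⁻ _ in Ioc x y, ENNReal.ofReal (Real.exp (-φ x)) :=
          setLIntegral_mono' measurableSet_Ioc hle
      _ = ENNReal.ofReal (Real.exp (-φ x)) * volume (Ioc x y) := setLIntegral_const _ _
      _ < ⊤ := ENNReal.mul_lt_top ENNReal.ofReal_lt_top (by simp [Real.volume_Ioc])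
  -- main equivalence
  have key : ∀ u₀ ∈ Ioi a,
      (Lam φ u₀ < ⊤ ↔ ∫⁻ t in Ioi u₀, ENNReal.ofReal (Real.exp (-φ t)) < ⊤) := by
    intro u₀ hu₀
    set b : ℝ := u₀ + 1 with hb_def
    have hub : u₀ < b := by simp [hb_def]
    have hbA : b ∈ Ioi a := lt_trans hu₀ hub
    set g : ℝ → ℝ := fun t => 1 / Real.sqrt (Real.exp (2 * (φ t - φ u₀)) - 1) with hg_def
    have hsplit : ∀ f : ℝ → ℝ≥0∞,
        ∫⁻ t in Ioi u₀, f t = (∫⁻ t in Ioc u₀ b, f t) + ∫⁻ t in Ioi b, f t := by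
      intro f
      rw [← Ioc_union_Ioi_eq_Ioi hub.le, lintegral_union measurableSet_Ioi Ioc_disjoint_Ioi_same]
    -- minimum of φ' on [u₀, b]
    have hIccA : Icc u₀ b ⊆ Ioi a := fun t ht => lt_of_lt_of_le hu₀ ht.1
    obtain ⟨c, hcmem, hcmin⟩ := isCompact_Icc.exists_isMinOn (nonempty_Icc.2 hub.le)
      (hφ'c.mono hIccA)
    set m : ℝ := φ' c with hm_def
    have hm : 0 < m := hφ'pos c (hIccA hcmem)
    -- MVT lower bound on [u₀, b]
    have hMVT : ∀ t ∈ Icc u₀ b, m * (t - u₀) ≤ φ t - φ u₀ := by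
      intro t ht
      refine (convex_Icc u₀ b).mul_sub_le_image_sub_of_le_deriv
        (hcont.mono hIccA) ?_ ?_ u₀ (left_mem_Icc.2 hub.le) t ht ht.1
      · intro x hx
        rw [interior_Icc] at hx
        exact ((hφ x (hIccA (Ioo_subset_Icc_self hx))).differentiableAt).differentiableWithinAt
      · intro x hx
        rw [interior_Icc] at hx
        have hxI : x ∈ Icc u₀ b := Ioo_subset_Icc_self hx
        rw [hderiv x (hIccA hxI)]
        exact hcmin hxI
    -- finiteness of the g-integral on (u₀, b]
    have hIg : IntegrableOn (fun x : ℝ => (x - u₀) ^ (-(1 / 2) : ℝ)) (Ioc u₀ b) := by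
      have h0 : IntervalIntegrable (fun x : ℝ => x ^ (-(1 / 2) : ℝ)) volume 0 1 :=
        intervalIntegral.intervalIntegrable_rpow' (by norm_num)
      have h1 := h0.comp_sub_right u₀
      rw [zero_add, add_comm] at h1
      exact (intervalIntegrable_iff_integrableOn_Ioc_of_le hub.le).mp h1
    have hgbound : ∀ t ∈ Ioc u₀ b,
        g t ≤ (1 / Real.sqrt (2 * m)) * (t - u₀) ^ (-(1 / 2) : ℝ) := by
      intro t ht
      have h1 : 0 < t - u₀ := sub_pos.2 ht.1
      have hs := hMVT t (Ioc_subset_Icc_self ht)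
      have h2 : 2 * m * (t - u₀) ≤ Real.exp (2 * (φ t - φ u₀)) - 1 := by
        have := Real.add_one_le_exp (2 * (φ t - φ u₀))
        nlinarith
      have h3 : 0 < 2 * m * (t - u₀) := by positivity
      have h4 : Real.sqrt (2 * m * (t - u₀)) ≤ Real.sqrt (Real.exp (2 * (φ t - φ u₀)) - 1) :=
        Real.sqrt_le_sqrt h2
      have h5 : 0 < Real.sqrt (2 * m * (t - u₀)) := Real.sqrt_pos.2 h3
      have h6 : g t ≤ 1 / Real.sqrt (2 * m * (t - u₀)) :=
        one_div_le_one_div_of_le h5 h4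
      refine h6.trans (le_of_eq ?_)
      rw [Real.sqrt_mul (by positivity), Real.sqrt_eq_rpow (t - u₀),
        Real.rpow_neg h1.le]
      ring
    have Cg : ∫⁻ t in Ioc u₀ b, ENNReal.ofReal (g t) < ⊤ := by
      calc ∫⁻ t in Ioc u₀ b, ENNReal.ofReal (g t)
          ≤ ∫⁻ t in Ioc u₀ b,
              ENNReal.ofReal ((1 / Real.sqrt (2 * m)) * (t - u₀) ^ (-(1 / 2) : ℝ)) :=
            setLIntegral_mono' measurableSet_Ioc
              (fun t ht => ENNReal.ofReal_le_ofReal (hgbound t ht))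
        _ < ⊤ := (hIg.const_mul _).lintegral_lt_top
    -- tail comparison on (b, ∞)
    set s₁ : ℝ := φ b - φ u₀ with hs₁_def
    have hs₁ : 0 < s₁ := sub_pos.2 (hmono hu₀ hbA hub)
    have htail_lo : ∀ t ∈ Ioi b,
        Real.exp (φ u₀) * Real.exp (-φ t) ≤ g t := by
      intro t ht
      have htA : t ∈ Ioi a := mem_Ioi.2 (lt_trans hbA ht)
      have hst : 0 < φ t - φ u₀ := sub_pos.2 (hmono hu₀ htA (lt_trans hub ht))
      have heq : Real.exp (φ u₀) * Real.exp (-φ t) = Real.exp (-(φ t - φ u₀)) := by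
        rw [← Real.exp_add]; ring_nf
      rw [heq]
      simp only [hg_def]
      exact aux_lo hst
    have htail_hi : ∀ t ∈ Ioi b,
        g t ≤ (1 / Real.sqrt (1 - Real.exp (-(2 * s₁)))) * (Real.exp (φ u₀) * Real.exp (-φ t)) := by
      intro t ht
      have htA : t ∈ Ioi a := mem_Ioi.2 (lt_trans hbA ht)
      have hss : s₁ ≤ φ t - φ u₀ := by
        have h := (hmono hbA htA ht).le
        rw [hs₁_def]; linarith
      have heq : Real.exp (φ u₀) * Real.exp (-φ t) = Real.exp (-(φ t - φ u₀)) := by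
        rw [← Real.exp_add]; ring_nf
      rw [heq]
      simp only [hg_def]
      exact aux_hi hs₁ hss
    -- conclude tail equivalence in ℝ≥0∞
    set T1 : ℝ≥0∞ := ∫⁻ t in Ioi b, ENNReal.ofReal (g t) with hT1
    set T2 : ℝ≥0∞ := ∫⁻ t in Ioi b, ENNReal.ofReal (Real.exp (-φ t)) with hT2
    have hlow : ENNReal.ofReal (Real.exp (φ u₀)) * T2 ≤ T1 := by
      rw [hT2, ← lintegral_const_mul' _ _ ENNReal.ofReal_ne_top]
      refine setLIntegral_mono' measurableSet_Ioi (fun t ht => ?_)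
      rw [← ENNReal.ofReal_mul (Real.exp_nonneg _)]
      exact ENNReal.ofReal_le_ofReal (htail_lo t ht)
    have hhi : T1 ≤ ENNReal.ofReal ((1 / Real.sqrt (1 - Real.exp (-(2 * s₁))))
        * Real.exp (φ u₀)) * T2 := by
      rw [hT2, ← lintegral_const_mul' _ _ ENNReal.ofReal_ne_top]
      refine setLIntegral_mono' measurableSet_Ioi (fun t ht => ?_)
      rw [← ENNReal.ofReal_mul (by positivity)]
      refine ENNReal.ofReal_le_ofReal ?_
      calc g t ≤ (1 / Real.sqrt (1 - Real.exp (-(2 * s₁))))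
          * (Real.exp (φ u₀) * Real.exp (-φ t)) := htail_hi t ht
        _ = (1 / Real.sqrt (1 - Real.exp (-(2 * s₁)))) * Real.exp (φ u₀)
          * Real.exp (-φ t) := by ring
    have htail_iff : T1 < ⊤ ↔ T2 < ⊤ := by
      constructor
      · intro h
        by_contra h2
        rw [not_lt, top_le_iff] at h2
        rw [h2, ENNReal.mul_top (by simp [Real.exp_pos])] at hlow
        exact absurd (top_le_iff.mp hlow) h.ne
      · intro h
        exact lt_of_le_of_lt hhi (ENNReal.mul_lt_top ENNReal.ofReal_lt_top h)
    -- assemble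
    have hLam : Lam φ u₀ = (∫⁻ t in Ioc u₀ b, ENNReal.ofReal (g t)) + T1 := hsplit _
    have hExp : (∫⁻ t in Ioi u₀, ENNReal.ofReal (Real.exp (-φ t)))
        = (∫⁻ t in Ioc u₀ b, ENNReal.ofReal (Real.exp (-φ t))) + T2 := hsplit _
    rw [hLam, hExp, ENNReal.add_lt_top, ENNReal.add_lt_top]
    constructor
    · rintro ⟨-, h⟩; exact ⟨hIocExp u₀ hu₀ b, htail_iff.1 h⟩
    · rintro ⟨-, h⟩; exact ⟨Cg, htail_iff.2 h⟩
  refine ⟨key, ?_⟩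
  rintro ⟨l₀, hl₀, hfin⟩ l hl
  have h2 : ∫⁻ t in Ioi l₀, ENNReal.ofReal (Real.exp (-φ t)) < ⊤ := (key l₀ hl₀).1 hfin
  refine (key l hl).2 ?_
  rcases le_or_gt l₀ l with hll | hll
  · exact lt_of_le_of_lt (lintegral_mono_set (Ioi_subset_Ioi hll)) h2
  · rw [← Ioc_union_Ioi_eq_Ioi hll.le,
      lintegral_union measurableSet_Ioi Ioc_disjoint_Ioi_same]
    exact ENNReal.add_lt_top.2 ⟨hIocExp l hl l₀, h2⟩
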